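/- Let G = (V,E) be a finite undirected graph with V ⊆ ℕ, and let p : E → [0,1]. Form a random orientation of G by orienting each edge e = {a,b} with a < b from a to b with probability p(e) and from b to a otherwise, independently over edges. For any three vertices s, a, b ∈ V, P(s → a and s → b) ≥ P(s → a) · P(s → b), where x → y denotes the event that the random orientation contains a directed path from x to y. -/

import Mathlib

open Classical Finset

noncomputable section

variable {V : Type*} [Fintype V] [LinearOrder V]

/-- An orientation of the edges of `G`: `true` on edge `e = {u,v}` (with `u < v`)
means the edge is oriented from `u` to `v` (min to max). -/
def Orient (G : SimpleGraph V) : Type _ := ↥G.edgeFinset → Bool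

instance (G : SimpleGraph V) : Fintype (Orient G) := by unfold Orient; infer_instance

/-- The edge `{u,v}` exists and is oriented from `u` to `v` in `ω`. -/
def step (G : SimpleGraph V) (ω : Orient G) (u v : V) : Prop :=
  ∃ h : G.Adj u v,
    ω ⟨s(u, v), SimpleGraph.mem_edgeFinset.mpr ((SimpleGraph.mem_edgeSet G).mpr h)⟩ = decide (u < v)

/-- There is a directed path from `x` to `y` in the orientation `ω`. -/
def reaches (G : SimpleGraph V) (ω : Orient G) (x y : V) : Prop :=
  Relation.ReflTransGen (step G ω) x y

/-- The probability of the orientation `ω` under independent `p`-biased coin flips. -/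
def wt (G : SimpleGraph V) (p : Sym2 V → ℝ) (ω : Orient G) : ℝ :=
  ∏ e : G.edgeFinset, if ω e then p e else 1 - p e

/-- Probability of an event under the `p`-biased random orientation measure. -/
def Pr (G : SimpleGraph V) (p : Sym2 V → ℝ) (A : Set (Orient G)) : ℝ :=
  ∑ ω : Orient G, A.indicator (wt G p) ω

namespace RandomOrientAux

variable (G : SimpleGraph V) (p : Sym2 V → ℝ)

/-- weight of a single coin. -/
def w (e : ↥G.edgeFinset) (b : Bool) : ℝ := if b then p ↑e else 1 - p ↑e

lemma w_nonneg (hp : ∀ e ∈ G.edgeSet, 0 ≤ p e ∧ p e ≤ 1) (e : ↥G.edgeFinset) (b : Bool) :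
    0 ≤ w G p e b := by
  have he : (e : Sym2 V) ∈ G.edgeSet := SimpleGraph.mem_edgeFinset.mp e.2
  obtain ⟨h0, h1⟩ := hp e he
  cases b <;> simp [w] <;> linarith

/-- `η` agrees with `ρ` outside `F`. -/
def constr (F : Finset ↥G.edgeFinset) (ρ η : Orient G) : Prop :=
  ∀ e ∉ F, η e = ρ e

/-- Conditional expectation: coordinates in `F` are random, others fixed by `ρ`. -/
def Exp (F : Finset ↥G.edgeFinset) (ρ : Orient G) (f : Orient G → ℝ) : ℝ :=
  ∑ η : Orient G, if constr G F ρ η then (∏ e ∈ F, w G p e (η e)) * f η else 0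

lemma constr_erase {F : Finset ↥G.edgeFinset} {ρ η : Orient G} {e : ↥G.edgeFinset}
    (he : e ∈ F) (b : Bool) :
    constr G (F.erase e) (Function.update ρ e b) η ↔ constr G F ρ η ∧ η e = b := by
  constructor
  · intro h
    constructor
    · intro e' he'
      have hne : e' ≠ e := fun hh => he' (hh ▸ he)
      have : e' ∉ F.erase e := fun hh => he' (Finset.mem_of_mem_erase hh)
      erw [h e' this, Function.update_of_ne hne]
    · have : e ∉ F.erase e := Finset.notMem_erase e F
      erw [h e this, Function.update_self]
  · rintro ⟨h, hb⟩ e' he'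
    rcases eq_or_ne e' e with rfl | hne
    · erw [hb, Function.update_self]
    · have : e' ∉ F := fun hh => he' (Finset.mem_erase.mpr ⟨hne, hh⟩)
      erw [h e' this, Function.update_of_ne hne]

lemma exp_split (F : Finset ↥G.edgeFinset) (ρ : Orient G) (f : Orient G → ℝ)
    (e : ↥G.edgeFinset) (he : e ∈ F) :
    Exp G p F ρ f
      = w G p e true * Exp G p (F.erase e) (Function.update ρ e true) f
        + w G p e false * Exp G p (F.erase e) (Function.update ρ e false) f := by
  unfold Exp
  rw [Finset.mul_sum, Finset.mul_sum, ← Finset.sum_add_distrib]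
  refine Finset.sum_congr rfl fun η _ => ?_
  have hprod : ∀ hc : constr G F ρ η,
      (∏ e' ∈ F, w G p e' (η e')) = w G p e (η e) * ∏ e' ∈ F.erase e, w G p e' (η e') := by
    intro _; exact (Finset.mul_prod_erase F (fun e' => w G p e' (η e')) he).symm
  cases hb : η e with
  | true =>
    have h1 : constr G (F.erase e) (Function.update ρ e true) η ↔ constr G F ρ η := by
      rw [constr_erase G he]; simp [hb]
    have h0 : ¬ constr G (F.erase e) (Function.update ρ e false) η := by
      rw [constr_erase G he]; simp [hb]
    rw [if_neg h0]
    by_cases hc : constr G F ρ η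
    · rw [if_pos hc, if_pos (h1.mpr hc), hprod hc, hb]; ring
    · rw [if_neg hc, if_neg (fun h => hc (h1.mp h))]; ring
  | false =>
    have h1 : constr G (F.erase e) (Function.update ρ e false) η ↔ constr G F ρ η := by
      rw [constr_erase G he]; simp [hb]
    have h0 : ¬ constr G (F.erase e) (Function.update ρ e true) η := by
      rw [constr_erase G he]; simp [hb]
    rw [if_neg h0]
    by_cases hc : constr G F ρ η
    · rw [if_pos hc, if_pos (h1.mpr hc), hprod hc, hb]; ring
    · rw [if_neg hc, if_neg (fun h => hc (h1.mp h))]; ring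

lemma exp_empty (ρ : Orient G) (f : Orient G → ℝ) : Exp G p ∅ ρ f = f ρ := by
  unfold Exp
  rw [Finset.sum_eq_single_of_mem ρ (Finset.mem_univ ρ)]
  · have hc : constr G ∅ ρ ρ := fun e _ => rfl
    rw [if_pos hc, Finset.prod_empty, one_mul]
  · intro η _ hne
    rw [if_neg]
    intro hc
    exact hne (funext fun e => hc e (Finset.notMem_empty e))

lemma exp_one (F : Finset ↥G.edgeFinset) (ρ : Orient G) :
    Exp G p F ρ (fun _ => (1 : ℝ)) = 1 := by
  induction F using Finset.induction_on generalizing ρ with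
  | empty => rw [exp_empty]
  | insert _ _ hnm ih =>
    rename_i e s
    erw [exp_split G p _ ρ _ e (Finset.mem_insert_self e s), Finset.erase_insert hnm, ih, ih]
    simp [w]

lemma exp_congr {F : Finset ↥G.edgeFinset} {ρ : Orient G} {f g : Orient G → ℝ}
    (h : ∀ η, constr G F ρ η → f η = g η) : Exp G p F ρ f = Exp G p F ρ g := by
  unfold Exp
  refine Finset.sum_congr rfl fun η _ => ?_
  by_cases hc : constr G F ρ η
  · rw [if_pos hc, if_pos hc, h η hc]
  · rw [if_neg hc, if_neg hc]

lemma exp_const (F : Finset ↥G.edgeFinset) (ρ : Orient G) (c : ℝ) :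
    Exp G p F ρ (fun _ => c) = c := by
  have h : Exp G p F ρ (fun _ => c) = c * Exp G p F ρ (fun _ => (1:ℝ)) := by
    unfold Exp
    rw [Finset.mul_sum]
    refine Finset.sum_congr rfl fun η _ => ?_
    by_cases hc : constr G F ρ η
    · rw [if_pos hc, if_pos hc]; ring
    · rw [if_neg hc, if_neg hc]; ring
  rw [h, exp_one, mul_one]

/-- A step along an edge not in `F`. -/
def stepOff (F : Finset ↥G.edgeFinset) (ρ : Orient G) (x y : V) : Prop :=
  ∃ h : G.Adj x y,
    (⟨s(x, y), SimpleGraph.mem_edgeFinset.mpr ((SimpleGraph.mem_edgeSet G).mpr h)⟩ :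
      ↥G.edgeFinset) ∉ F ∧
    ρ ⟨s(x, y), SimpleGraph.mem_edgeFinset.mpr ((SimpleGraph.mem_edgeSet G).mpr h)⟩
      = decide (x < y)

/-- Vertices reachable from `s` using only edges outside `F`. -/
def cl (F : Finset ↥G.edgeFinset) (ρ : Orient G) (s : V) : Set V :=
  {x | Relation.ReflTransGen (stepOff G F ρ) s x}

lemma cl_subset_reach {F : Finset ↥G.edgeFinset} {ρ η : Orient G}
    (hc : constr G F ρ η) {s x : V} (hx : x ∈ cl G F ρ s) : reaches G η s x := by
  refine Relation.ReflTransGen.mono ?_ _ _ hx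
  rintro u v ⟨h, hmem, hval⟩
  exact ⟨h, by rw [hc _ hmem]; exact hval⟩

lemma reach_eq_cl {F : Finset ↥G.edgeFinset} {ρ : Orient G} {s : V}
    (hnone : ∀ e ∈ F, ∀ u v : V, (e : Sym2 V) = s(u, v) → u ∉ cl G F ρ s)
    {η : Orient G} (hc : constr G F ρ η) (x : V) :
    reaches G η s x ↔ x ∈ cl G F ρ s := by
  constructor
  · intro h
    induction h with
    | refl => exact Relation.ReflTransGen.refl
    | tail hpre hstep ih =>
      rename_i y z
      obtain ⟨hadj, hval⟩ := hstep
      set e : ↥G.edgeFinset :=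
        ⟨s(y, z), SimpleGraph.mem_edgeFinset.mpr ((SimpleGraph.mem_edgeSet G).mpr hadj)⟩ with hedef
      have heF : e ∉ F := fun hmem => hnone e hmem y z rfl ih
      exact Relation.ReflTransGen.tail ih ⟨hadj, heF, by rw [← hc e heF]; exact hval⟩
  · exact fun h => cl_subset_reach G hc h

lemma reach_update {F : Finset ↥G.edgeFinset} {ρ : Orient G} {s u v : V}
    {e : ↥G.edgeFinset} (he : e ∈ F) (huv : (e : Sym2 V) = s(u, v))
    (hu : u ∈ cl G F ρ s) {η : Orient G} (hc : constr G F ρ η) {x : V}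
    (h : reaches G η s x) :
    reaches G (Function.update η e (decide (u < v))) s x := by
  set η' := Function.update η e (decide (u < v)) with hη'
  have hc' : constr G F ρ η' := by
    intro e' he'
    have hne : e' ≠ e := fun hh => he' (hh ▸ he)
    erw [hη', Function.update_of_ne hne]
    exact hc e' he'
  have hu' : reaches G η' s u := cl_subset_reach G hc' hu
  induction h with
  | refl => exact Relation.ReflTransGen.refl
  | tail hpre hstep ih =>
    rename_i y z
    obtain ⟨hadj, hval⟩ := hstep
    set e'' : ↥G.edgeFinset :=
      ⟨s(y, z), SimpleGraph.mem_edgeFinset.mpr ((SimpleGraph.mem_edgeSet G).mpr hadj)⟩ with he''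
    by_cases hee : e'' = e
    · have hyz : s(y, z) = s(u, v) := by
        rw [← huv]; exact congrArg Subtype.val hee
      rcases Sym2.eq_iff.mp hyz with ⟨hy, hz⟩ | ⟨hy, hz⟩
      · subst hy; subst hz
        refine Relation.ReflTransGen.tail ih ⟨hadj, ?_⟩
        have : (⟨s(y, z), SimpleGraph.mem_edgeFinset.mpr
            ((SimpleGraph.mem_edgeSet G).mpr hadj)⟩ : ↥G.edgeFinset) = e := hee
        erw [this, hη', Function.update_self]
      · subst hz
        exact hu'
    · refine Relation.ReflTransGen.tail ih ⟨hadj, ?_⟩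
      erw [hη', Function.update_of_ne hee]
      exact hval

/-- indicator of reaching `t` from `s`. -/
def ind (s t : V) (ω : Orient G) : ℝ := if reaches G ω s t then 1 else 0

lemma ind_nonneg (s t : V) (ω : Orient G) : 0 ≤ ind G s t ω := by
  unfold ind; split <;> norm_num

lemma exp_flip_le (hp : ∀ e ∈ G.edgeSet, 0 ≤ p e ∧ p e ≤ 1)
    {F : Finset ↥G.edgeFinset} {ρ : Orient G} {s u v : V}
    {e : ↥G.edgeFinset} (he : e ∈ F) (huv : (e : Sym2 V) = s(u, v))
    (hu : u ∈ cl G F ρ s) (t : V) :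
    Exp G p (F.erase e) (Function.update ρ e (!decide (u < v))) (ind G s t)
      ≤ Exp G p (F.erase e) (Function.update ρ e (decide (u < v))) (ind G s t) := by
  set out := decide (u < v) with hout
  -- the flip involution
  have hinv : Function.Involutive (fun η : Orient G => Function.update η e (!(η e))) := by
    intro η
    funext e'
    rcases eq_or_ne e' e with rfl | hne
    · beta_reduce; erw [Function.update_self, Function.update_self, Bool.not_not]
    · beta_reduce; erw [Function.update_of_ne hne, Function.update_of_ne hne]
  set φ : Orient G ≃ Orient G := hinv.toPerm _ with hφ
  have hre : Exp G p (F.erase e) (Function.update ρ e out) (ind G s t)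
      = ∑ η : Orient G,
        if constr G (F.erase e) (Function.update ρ e out) (φ η) then
          (∏ e' ∈ F.erase e, w G p e' (φ η e')) * ind G s t (φ η) else 0 := by
    unfold Exp
    exact (Equiv.sum_comp φ _).symm
  rw [hre]
  unfold Exp
  refine Finset.sum_le_sum fun η _ => ?_
  by_cases hcin : constr G (F.erase e) (Function.update ρ e (!out)) η
  · obtain ⟨hcF, hηe⟩ := (constr_erase G he (!out)).mp hcin
    have hφη : φ η = Function.update η e out := by
      show Function.update η e (!(η e)) = Function.update η e out
      rw [hηe, Bool.not_not]
    have hcout : constr G (F.erase e) (Function.update ρ e out) (φ η) := by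
      rw [hφη]
      refine (constr_erase G he out).mpr ⟨?_, Function.update_self _ _ _⟩
      intro e' he'
      have hne : e' ≠ e := fun hh => he' (hh ▸ he)
      erw [Function.update_of_ne hne]
      exact hcF e' he'
    rw [if_pos hcin, if_pos hcout]
    have hprodeq : (∏ e' ∈ F.erase e, w G p e' (φ η e'))
        = ∏ e' ∈ F.erase e, w G p e' (η e') := by
      refine Finset.prod_congr rfl fun e' he' => ?_
      have hne : e' ≠ e := (Finset.mem_erase.mp he').1
      erw [hφη, Function.update_of_ne hne]
    rw [hprodeq]
    refine mul_le_mul_of_nonneg_left ?_ (Finset.prod_nonneg fun e' _ => w_nonneg G p hp _ _)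
    -- ind G s t η ≤ ind G s t (φ η)
    have hmono : reaches G η s t → reaches G (φ η) s t := by
      intro hr
      rw [hφη]
      exact reach_update G he huv hu hcF hr
    unfold ind
    by_cases hr : reaches G η s t
    · rw [if_pos hr, if_pos (hmono hr)]
    · rw [if_neg hr]
      split <;> norm_num
  · rw [if_neg hcin]
    by_cases hcout : constr G (F.erase e) (Function.update ρ e out) (φ η)
    · rw [if_pos hcout]
      exact mul_nonneg (Finset.prod_nonneg fun e' _ => w_nonneg G p hp _ _)
        (ind_nonneg G s t _)
    · rw [if_neg hcout]

lemma chebyshev2 {pp q x1 x0 y1 y0 : ℝ} (hp : 0 ≤ pp) (hq : 0 ≤ q) (hpq : pp + q = 1)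
    (h : 0 ≤ (x1 - x0) * (y1 - y0)) :
    (pp * x1 + q * x0) * (pp * y1 + q * y0) ≤ pp * (x1 * y1) + q * (x0 * y0) := by
  have key : pp * (x1 * y1) + q * (x0 * y0) - (pp * x1 + q * x0) * (pp * y1 + q * y0)
      = pp * q * ((x1 - x0) * (y1 - y0)) := by
    have hq' : q = 1 - pp := by linarith
    rw [hq']; ring
  nlinarith [mul_nonneg (mul_nonneg hp hq) h]

lemma main_ineq (hp : ∀ e ∈ G.edgeSet, 0 ≤ p e ∧ p e ≤ 1) (s a b : V)
    (F : Finset ↥G.edgeFinset) :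
    ∀ ρ : Orient G,
      Exp G p F ρ (ind G s a) * Exp G p F ρ (ind G s b)
        ≤ Exp G p F ρ (fun ω => ind G s a ω * ind G s b ω) := by
  induction F using Finset.strongInduction with
  | _ F ih =>
  intro ρ
  by_cases hcase : ∃ e ∈ F, ∃ u v : V, (e : Sym2 V) = s(u, v) ∧ u ∈ cl G F ρ s
  · obtain ⟨e, he, u, v, huv, hu⟩ := hcase
    have hihsub := ih (F.erase e) (Finset.erase_ssubset he)
    set F' := F.erase e with hF'
    set ρt := Function.update ρ e true with hρt
    set ρf := Function.update ρ e false with hρf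
    have hpt : (0:ℝ) ≤ w G p e true := w_nonneg G p hp e true
    have hpf : (0:ℝ) ≤ w G p e false := w_nonneg G p hp e false
    have hsum : w G p e true + w G p e false = 1 := by simp [w]
    have hmono : 0 ≤ (Exp G p F' ρt (ind G s a) - Exp G p F' ρf (ind G s a))
        * (Exp G p F' ρt (ind G s b) - Exp G p F' ρf (ind G s b)) := by
      cases hd : decide (u < v) with
      | true =>
        have h1 := exp_flip_le G p hp he huv hu a
        have h2 := exp_flip_le G p hp he huv hu b
        rw [hd] at h1 h2
        simp only [Bool.not_true] at h1 h2
        have := mul_nonneg (sub_nonneg.mpr h1) (sub_nonneg.mpr h2)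
        exact this
      | false =>
        have h1 := exp_flip_le G p hp he huv hu a
        have h2 := exp_flip_le G p hp he huv hu b
        rw [hd] at h1 h2
        simp only [Bool.not_false] at h1 h2
        have := mul_nonneg (sub_nonneg.mpr h1) (sub_nonneg.mpr h2)
        nlinarith [this]
    rw [exp_split G p F ρ (ind G s a) e he, exp_split G p F ρ (ind G s b) e he,
      exp_split G p F ρ (fun ω => ind G s a ω * ind G s b ω) e he]
    calc (w G p e true * Exp G p F' ρt (ind G s a) + w G p e false * Exp G p F' ρf (ind G s a))
          * (w G p e true * Exp G p F' ρt (ind G s b) + w G p e false * Exp G p F' ρf (ind G s b))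
        ≤ w G p e true * (Exp G p F' ρt (ind G s a) * Exp G p F' ρt (ind G s b))
            + w G p e false * (Exp G p F' ρf (ind G s a) * Exp G p F' ρf (ind G s b)) :=
          chebyshev2 hpt hpf hsum hmono
      _ ≤ w G p e true * Exp G p F' ρt (fun ω => ind G s a ω * ind G s b ω)
            + w G p e false * Exp G p F' ρf (fun ω => ind G s a ω * ind G s b ω) := by
          refine add_le_add (mul_le_mul_of_nonneg_left (hihsub ρt) hpt)
            (mul_le_mul_of_nonneg_left (hihsub ρf) hpf)
  · push_neg at hcase
    have key : ∀ η, constr G F ρ η → ∀ x, reaches G η s x ↔ x ∈ cl G F ρ s :=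
      fun η hc x => reach_eq_cl G hcase hc x
    set ca : ℝ := if a ∈ cl G F ρ s then 1 else 0 with hca
    set cb : ℝ := if b ∈ cl G F ρ s then 1 else 0 with hcb
    have h1 : Exp G p F ρ (ind G s a) = ca := by
      rw [exp_congr G p (g := fun _ => ca) (fun η hη => by
        unfold ind; rw [if_congr (key η hη a) rfl rfl]), exp_const]
    have h2 : Exp G p F ρ (ind G s b) = cb := by
      rw [exp_congr G p (g := fun _ => cb) (fun η hη => by
        unfold ind; rw [if_congr (key η hη b) rfl rfl]), exp_const]
    have h12 : Exp G p F ρ (fun ω => ind G s a ω * ind G s b ω) = ca * cb := by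
      rw [exp_congr G p (g := fun _ => ca * cb) (fun η hη => by
        unfold ind; rw [if_congr (key η hη a) rfl rfl, if_congr (key η hη b) rfl rfl]),
        exp_const]
    rw [h1, h2, h12]

lemma pr_eq_exp (A : Set (Orient G)) :
    Pr G p A = Exp G p Finset.univ (fun _ => true) (fun ω => if ω ∈ A then 1 else 0) := by
  unfold Pr Exp
  refine Finset.sum_congr rfl fun ω _ => ?_
  have hc : constr G Finset.univ (fun _ => true) ω := fun e he => absurd (Finset.mem_univ e) he
  rw [if_pos hc, Set.indicator_apply]
  have hwt : wt G p ω = ∏ e ∈ Finset.univ, w G p e (ω e) := by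
    unfold wt w
    rfl
  rw [hwt]
  beta_reduce
  by_cases hA : ω ∈ A
  · rw [if_pos hA, if_pos hA, mul_one]
  · rw [if_neg hA, if_neg hA, mul_zero]

end RandomOrientAux

set_option maxHeartbeats 2000000 in
/-- Connection events from a common source are positively correlated in a
`p`-biased random orientation of a finite graph. -/
theorem connections_positively_correlated (G : SimpleGraph V) (p : Sym2 V → ℝ)
    (hp : ∀ e ∈ G.edgeSet, 0 ≤ p e ∧ p e ≤ 1) (s a b : V) :
    Pr G p {ω | reaches G ω s a ∧ reaches G ω s b} ≥
      Pr G p {ω | reaches G ω s a} * Pr G p {ω | reaches G ω s b} := by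
  open RandomOrientAux in
  have hmain := RandomOrientAux.main_ineq G p hp s a b Finset.univ (fun _ => true)
  have hfa : Pr G p {ω | reaches G ω s a}
      = Exp G p Finset.univ (fun _ => true) (RandomOrientAux.ind G s a) := by
    rw [pr_eq_exp]
    exact exp_congr G p (fun η _ => by simp [RandomOrientAux.ind, Set.mem_setOf_eq])
  have hfb : Pr G p {ω | reaches G ω s b}
      = Exp G p Finset.univ (fun _ => true) (RandomOrientAux.ind G s b) := by
    rw [pr_eq_exp]
    exact exp_congr G p (fun η _ => by simp [RandomOrientAux.ind, Set.mem_setOf_eq])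
  have hfab : Pr G p {ω | reaches G ω s a ∧ reaches G ω s b}
      = Exp G p Finset.univ (fun _ => true)
          (fun ω => RandomOrientAux.ind G s a ω * RandomOrientAux.ind G s b ω) := by
    rw [pr_eq_exp]
    exact exp_congr G p (fun η _ => by
      simp only [Set.mem_setOf_eq, RandomOrientAux.ind]
      by_cases h1 : reaches G η s a <;> by_cases h2 : reaches G η s b <;> simp [h1, h2])
  rw [ge_iff_le, hfa, hfb, hfab]
  exact hmain
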